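/- arXiv:1505.05852 — 4 statements merged into one kernel-verified Lean document; each statement's English description precedes it below -/
import Mathlib

section
/- The number of single-peaked (n,4)-elections equals 24 · 4^{n-1} · (2^{n+1} − 3). -/
def SPwrt {m : ℕ} (V A : Equiv.Perm (Fin m)) : Prop :=
  ∀ c₁ c₂ c₃ : Fin m, ¬(A c₁ < A c₂ ∧ A c₂ < A c₃ ∧ V c₁ < V c₂ ∧ V c₃ < V c₂)

def SPElection {n m : ℕ} (P : Fin n → Equiv.Perm (Fin m)) : Prop :=
  ∃ A : Equiv.Perm (Fin m), ∀ i, SPwrt (P i) A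

namespace SPAux

instance {m : ℕ} (V A : Equiv.Perm (Fin m)) : Decidable (SPwrt V A) := by
  unfold SPwrt; infer_instance

instance {n m : ℕ} (P : Fin n → Equiv.Perm (Fin m)) : Decidable (SPElection P) := by
  unfold SPElection; infer_instance

abbrev G := Equiv.Perm (Fin 4)

def W (A : G) : Finset G := Finset.univ.filter (fun V => SPwrt V A)

lemma mem_W {V A : G} : V ∈ W A ↔ SPwrt V A := by simp [W]

def a2 : G := Equiv.swap 0 1
def a3 : G := Equiv.swap 0 1 * Equiv.swap 1 2
def a4 : G := a3 * Equiv.swap 2 3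

lemma axis_classes : ∀ A : G, SPwrt 1 A →
    (W A = W 1 ∨ W A = W a2 ∨ W A = W a3 ∨ W A = W a4) := by decide

lemma spwrt_mul {V A g : G} (h : SPwrt V A) : SPwrt (V * g) (A * g) := by
  intro c₁ c₂ c₃
  simpa [Equiv.Perm.mul_apply] using h (g c₁) (g c₂) (g c₃)

lemma spElection_mul {n : ℕ} {P : Fin n → G} (g : G) (h : SPElection P) :
    SPElection (fun i => P i * g) := by
  obtain ⟨A, hA⟩ := h
  exact ⟨A * g, fun i => spwrt_mul (hA i)⟩

lemma spElection_mul_iff {n : ℕ} (P : Fin n → G) (g : G) :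
    SPElection (fun i => P i * g) ↔ SPElection P := by
  constructor
  · intro h
    have h2 := spElection_mul g⁻¹ h
    simpa using h2
  · exact spElection_mul g

def E (m : ℕ) (S : Finset G) : Finset (Fin (m + 1) → G) :=
  Fintype.piFinset (fun j => if j = 0 then {1} else S)

lemma mem_E {m : ℕ} {S : Finset G} (h1 : (1 : G) ∈ S) {Q : Fin (m + 1) → G} :
    Q ∈ E m S ↔ (Q 0 = 1 ∧ ∀ j, Q j ∈ S) := by
  simp only [E, Fintype.mem_piFinset]
  constructor
  · intro h
    have h0 : Q 0 = 1 := by have hh := h 0; simpa using hh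
    refine ⟨h0, fun j => ?_⟩
    by_cases hj : j = 0
    · subst hj; rw [h0]; exact h1
    · have hh := h j; simpa [hj] using hh
  · rintro ⟨h0, hS⟩ j
    by_cases hj : j = 0
    · subst hj; simp [h0]
    · simp [hj, hS j]

lemma E_inter {m : ℕ} (S T : Finset G) : E m S ∩ E m T = E m (S ∩ T) := by
  ext Q
  simp only [Finset.mem_inter, E, Fintype.mem_piFinset, ← forall_and]
  refine forall_congr' fun j => ?_
  split_ifs <;> simp

lemma card_E {m : ℕ} (S : Finset G) : (E m S).card = S.card ^ m := by
  rw [E, Fintype.card_piFinset, Fin.prod_univ_succ]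
  simp [Fin.succ_ne_zero]

lemma card_W : (W 1).card = 8 ∧ (W a2).card = 8 ∧ (W a3).card = 8 ∧ (W a4).card = 8 := by
  decide

lemma one_mem_W : (1 : G) ∈ W 1 ∧ (1 : G) ∈ W a2 ∧ (1 : G) ∈ W a3 ∧ (1 : G) ∈ W a4 := by
  decide

end SPAux

open SPAux in
/-- The number of single-peaked `(n,4)`-elections equals `24 · 4^(n−1) · (2^(n+1) − 3)`. -/
theorem count_single_peaked_four_candidates (n : ℕ) (hn : 1 ≤ n) :
    {P : Fin n → Equiv.Perm (Fin 4) | SPElection P}.ncard =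
      24 * 4 ^ (n - 1) * (2 ^ (n + 1) - 3) := by
  obtain ⟨m, rfl⟩ : ∃ m, n = m + 1 := ⟨n - 1, (Nat.succ_pred_eq_of_pos hn).symm⟩
  have hset : {P : Fin (m + 1) → G | SPElection P} =
      ↑(Finset.univ.filter (fun P : Fin (m + 1) → G => SPElection P)) := by
    ext P; simp
  rw [hset, Set.ncard_coe_finset]
  set F₁ : Finset (Fin (m + 1) → G) :=
    Finset.univ.filter (fun Q : Fin (m + 1) → G => Q 0 = 1 ∧ SPElection Q) with hF₁def
  -- Step 1: factor out the 24 choices of the first vote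
  have step1 : (Finset.univ.filter (fun P : Fin (m + 1) → G => SPElection P)).card
      = 24 * F₁.card := by
    have hcard : ((Finset.univ : Finset G) ×ˢ F₁).card = 24 * F₁.card := by
      rw [Finset.card_product, show (Finset.univ : Finset G).card = 24 from by decide]
    rw [← hcard]
    refine Finset.card_nbij' (fun P => (P 0, fun j => P j * (P 0)⁻¹))
      (fun x => fun j => x.2 j * x.1) ?_ ?_ ?_ ?_
    · intro P hP
      simp only [Finset.mem_coe, Finset.mem_filter, Finset.mem_univ, true_and] at hP
      simp only [Finset.mem_coe, Finset.mem_product, Finset.mem_univ, true_and, hF₁def,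
        Finset.mem_filter]
      refine ⟨?_, ?_⟩
      · simp
      · exact (spElection_mul_iff P (P 0)⁻¹).2 hP
    · rintro ⟨g, Q⟩ hx
      rw [Finset.mem_coe, Finset.mem_product, hF₁def, Finset.mem_filter] at hx
      obtain ⟨-, -, h0, hSP⟩ := hx
      simp only [Finset.mem_coe, Finset.mem_filter, Finset.mem_univ, true_and]
      exact spElection_mul g hSP
    · intro P _
      funext j
      simp
    · rintro ⟨g, Q⟩ hx
      rw [Finset.mem_coe, Finset.mem_product, hF₁def, Finset.mem_filter] at hx
      obtain ⟨-, -, h0x, -⟩ := hx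
      have h0 : Q 0 = 1 := h0x
      have hfst : (fun j => Q j * g) 0 = g := by simp [h0]
      have hsnd : (fun j => (fun j' => Q j' * g) j * ((fun j' => Q j' * g) 0)⁻¹) = Q := by
        funext j
        simp [h0, mul_assoc]
      exact Prod.ext hfst hsnd
  rw [step1]
  -- Step 2: F₁ is a union of four product sets
  obtain ⟨w1, w2, w3, w4⟩ := one_mem_W
  have hunion : F₁ = E m (W 1) ∪ E m (W a2) ∪ E m (W a3) ∪ E m (W a4) := by
    ext Q
    simp only [hF₁def, Finset.mem_filter, Finset.mem_univ, true_and, Finset.mem_union]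
    constructor
    · rintro ⟨h0, A, hA⟩
      have h1A : SPwrt 1 A := h0 ▸ hA 0
      have hmem : ∀ j, Q j ∈ W A := fun j => mem_W.2 (hA j)
      rcases axis_classes A h1A with h | h | h | h
      · exact Or.inl (Or.inl (Or.inl ((mem_E w1).2 ⟨h0, fun j => h ▸ hmem j⟩)))
      · exact Or.inl (Or.inl (Or.inr ((mem_E w2).2 ⟨h0, fun j => h ▸ hmem j⟩)))
      · exact Or.inl (Or.inr ((mem_E w3).2 ⟨h0, fun j => h ▸ hmem j⟩))
      · exact Or.inr ((mem_E w4).2 ⟨h0, fun j => h ▸ hmem j⟩)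
    · rintro (((h | h) | h) | h)
      · obtain ⟨h0, hS⟩ := (mem_E w1).1 h
        exact ⟨h0, 1, fun j => mem_W.1 (hS j)⟩
      · obtain ⟨h0, hS⟩ := (mem_E w2).1 h
        exact ⟨h0, a2, fun j => mem_W.1 (hS j)⟩
      · obtain ⟨h0, hS⟩ := (mem_E w3).1 h
        exact ⟨h0, a3, fun j => mem_W.1 (hS j)⟩
      · obtain ⟨h0, hS⟩ := (mem_E w4).1 h
        exact ⟨h0, a4, fun j => mem_W.1 (hS j)⟩
  -- Step 3: inclusion–exclusion
  have hF₁card : F₁.card = 4 * 8 ^ m - 3 * 4 ^ m := by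
    rw [hunion]
    set A := E m (W 1)
    set B := E m (W a2)
    set C := E m (W a3)
    set D := E m (W a4)
    have e1 := Finset.card_union_add_card_inter A B
    have e2 := Finset.card_union_add_card_inter (A ∪ B) C
    have e3 : (A ∪ B) ∩ C = A ∩ C ∪ B ∩ C := Finset.union_inter_distrib_right A B C
    have e4 := Finset.card_union_add_card_inter (A ∩ C) (B ∩ C)
    have e5 := Finset.card_union_add_card_inter (A ∪ B ∪ C) D
    have e6 : (A ∪ B ∪ C) ∩ D = A ∩ D ∪ B ∩ D ∪ C ∩ D := by
      rw [Finset.union_inter_distrib_right, Finset.union_inter_distrib_right]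
    have e7 := Finset.card_union_add_card_inter (A ∩ D) (B ∩ D)
    have e8 := Finset.card_union_add_card_inter (A ∩ D ∪ B ∩ D) (C ∩ D)
    have e9 : (A ∩ D ∪ B ∩ D) ∩ (C ∩ D) = (A ∩ D) ∩ (C ∩ D) ∪ (B ∩ D) ∩ (C ∩ D) :=
      Finset.union_inter_distrib_right _ _ _
    have e10 := Finset.card_union_add_card_inter ((A ∩ D) ∩ (C ∩ D)) ((B ∩ D) ∩ (C ∩ D))
    -- cardinalities of all the pieces
    have cA : A.card = 8 ^ m := by rw [card_E, card_W.1]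
    have cB : B.card = 8 ^ m := by rw [card_E, card_W.2.1]
    have cC : C.card = 8 ^ m := by rw [card_E, card_W.2.2.1]
    have cD : D.card = 8 ^ m := by rw [card_E, card_W.2.2.2]
    have cAB : (A ∩ B).card = 2 ^ m := by
      rw [E_inter, card_E, show (W 1 ∩ W a2).card = 2 by decide]
    have cAC : (A ∩ C).card = 2 ^ m := by
      rw [E_inter, card_E, show (W 1 ∩ W a3).card = 2 by decide]
    have cAD : (A ∩ D).card = 4 ^ m := by
      rw [E_inter, card_E, show (W 1 ∩ W a4).card = 4 by decide]
    have cBC : (B ∩ C).card = 4 ^ m := by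
      rw [E_inter, card_E, show (W a2 ∩ W a3).card = 4 by decide]
    have cBD : (B ∩ D).card = 2 ^ m := by
      rw [E_inter, card_E, show (W a2 ∩ W a4).card = 2 by decide]
    have cCD : (C ∩ D).card = 4 ^ m := by
      rw [E_inter, card_E, show (W a3 ∩ W a4).card = 4 by decide]
    have cACBC : ((A ∩ C) ∩ (B ∩ C)).card = 2 ^ m := by
      rw [E_inter, E_inter, E_inter, card_E,
        show (W 1 ∩ W a3 ∩ (W a2 ∩ W a3)).card = 2 by decide]
    have cADBD : ((A ∩ D) ∩ (B ∩ D)).card = 2 ^ m := by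
      rw [E_inter, E_inter, E_inter, card_E,
        show (W 1 ∩ W a4 ∩ (W a2 ∩ W a4)).card = 2 by decide]
    have cADCD : ((A ∩ D) ∩ (C ∩ D)).card = 2 ^ m := by
      rw [E_inter, E_inter, E_inter, card_E,
        show (W 1 ∩ W a4 ∩ (W a3 ∩ W a4)).card = 2 by decide]
    have cBDCD : ((B ∩ D) ∩ (C ∩ D)).card = 2 ^ m := by
      rw [E_inter, E_inter, E_inter, card_E,
        show (W a2 ∩ W a4 ∩ (W a3 ∩ W a4)).card = 2 by decide]
    have cQuad : (((A ∩ D) ∩ (C ∩ D)) ∩ ((B ∩ D) ∩ (C ∩ D))).card = 2 ^ m := by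
      rw [E_inter, E_inter, E_inter, E_inter, E_inter, E_inter, card_E,
        show (W 1 ∩ W a4 ∩ (W a3 ∩ W a4) ∩ (W a2 ∩ W a4 ∩ (W a3 ∩ W a4))).card = 2
          by decide]
    rw [e3] at e2
    rw [e6] at e5
    rw [e9] at e8
    omega
  rw [hF₁card]
  -- Step 4: arithmetic
  have h8 : (8 : ℕ) ^ m = 4 ^ m * 2 ^ m := by
    rw [show (8 : ℕ) = 4 * 2 from rfl, mul_pow]
  have h2 : (2 : ℕ) ^ (m + 1 + 1) = 4 * 2 ^ m := by ring
  have hb : 1 ≤ (2 : ℕ) ^ m := Nat.one_le_two_pow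
  rw [h8, h2, Nat.add_sub_cancel]
  have h3a : 3 * 4 ^ m ≤ 4 * (4 ^ m * 2 ^ m) := by
    have hle : 4 ^ m ≤ 4 ^ m * 2 ^ m := Nat.le_mul_of_pos_right _ (by positivity)
    omega
  have h3b : 3 ≤ 4 * 2 ^ m := by omega
  zify [h3a, h3b]
  ring
end

section
/- An election with three candidates is single-peaked if and only if the set of candidates ranked last across all votes has cardinality at most 2. -/
private lemma fin3_ne_two_lt : ∀ x : Fin 3, x ≠ 2 → x < 2 := by decide
private lemma fin3_max : ∀ x y z : Fin 3, y < x → z < x → y ≠ z → x = 2 := by decide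
private lemma fin3_ne_one : ∀ x : Fin 3, x ≠ 1 → x = 0 ∨ x = 2 := by decide
private lemma fin3_mid : ∀ x y z : Fin 3, x < y → y < z → y = 1 := by decide

/-- An election with three candidates is single-peaked if and only if the set of
candidates ranked last (rank `2`, the lowest of the three ranks) in some vote has
cardinality at most 2. -/
theorem single_peaked_iff_at_most_two_last (n : ℕ) (P : Fin n → Equiv.Perm (Fin 3)) :
    SPElection P ↔ {c : Fin 3 | ∃ i, P i c = 2}.ncard ≤ 2 := by
  constructor
  · rintro ⟨A, hA⟩
    have hsub : {c : Fin 3 | ∃ i, P i c = 2} ⊆ {A.symm 0, A.symm 2} := by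
      rintro c ⟨i, hc⟩
      have h01 : A (A.symm 0) = 0 := A.apply_symm_apply 0
      have h21 : A (A.symm 2) = 2 := A.apply_symm_apply 2
      have h1 : A c ≠ 1 := by
        intro h
        apply hA i (A.symm 0) c (A.symm 2)
        refine ⟨?_, ?_, ?_, ?_⟩
        · rw [h01, h]; decide
        · rw [h21, h]; decide
        · have hne : P i (A.symm 0) ≠ 2 := by
            rw [← hc]
            intro he
            have : A.symm 0 = c := (P i).injective he
            rw [← this, h01] at h; exact absurd h (by decide)
          rw [hc]; exact fin3_ne_two_lt _ hne
        · have hne : P i (A.symm 2) ≠ 2 := by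
            intro he
            have : A.symm 2 = c := (P i).injective (he.trans hc.symm)
            rw [← this, h21] at h; exact absurd h (by decide)
          rw [hc]; exact fin3_ne_two_lt _ hne
      rcases fin3_ne_one (A c) h1 with h | h
      · left; rw [← h]; exact (A.symm_apply_apply c).symm
      · right; rw [← h]; exact (A.symm_apply_apply c).symm
    calc {c : Fin 3 | ∃ i, P i c = 2}.ncard
        ≤ ({A.symm 0, A.symm 2} : Set (Fin 3)).ncard :=
          Set.ncard_le_ncard hsub (Set.toFinite _)
      _ ≤ 2 := le_trans (Set.ncard_insert_le _ _) (by simp)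
  · intro h
    have hb : ∃ b : Fin 3, ∀ i, P i b ≠ 2 := by
      by_contra hb
      push_neg at hb
      have huniv : {c : Fin 3 | ∃ i, P i c = 2} = Set.univ := by
        ext c; simpa using hb c
      rw [huniv, Set.ncard_univ] at h
      simp at h
    obtain ⟨b, hb⟩ := hb
    refine ⟨Equiv.swap 1 b, fun i c₁ c₂ c₃ ⟨ha1, ha2, hv1, hv2⟩ => ?_⟩
    have hmid : Equiv.swap 1 b c₂ = 1 := fin3_mid _ _ _ ha1 ha2
    have hc2b : c₂ = b := by
      have := Equiv.swap_apply_right 1 b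
      exact (Equiv.swap 1 b).injective (hmid.trans this.symm)
    have hne : c₁ ≠ c₃ := by
      intro he; rw [he] at ha1; exact absurd (ha1.trans ha2) (lt_irrefl _)
    have hPne : P i c₁ ≠ P i c₃ := fun he => hne ((P i).injective he)
    have : P i c₂ = 2 := fin3_max _ _ _ hv1 hv2 hPne
    exact hb i (hc2b ▸ this)
end

section
/- If an election contains both a vote V and its reverse V̄, and the election is single-peaked with respect to an axis A, then A equals V or V̄ (viewed as linear orders on the candidates). -/
/-- The reverse of a vote `V`: all comparisons are reversed
(rank `r` becomes rank `m − 1 − r`). -/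
def revVote {m : ℕ} (V : Equiv.Perm (Fin m)) : Equiv.Perm (Fin m) :=
  V.trans (Fin.revPerm)

/-- If an election contains both a vote `V` and its reverse `V̄`, and the election
is single-peaked with respect to an axis `A`, then `A = V` or `A = V̄`
(as linear orders on the candidates). -/
theorem axis_eq_of_vote_and_reverse {n m : ℕ} (P : Fin n → Equiv.Perm (Fin m))
    (V A : Equiv.Perm (Fin m)) (i j : Fin n) (hi : P i = V) (hj : P j = revVote V)
    (hSP : ∀ k, SPwrt (P k) A) :
    A = V ∨ A = revVote V := by
  have hV : SPwrt V A := hi ▸ hSP i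
  have hR : SPwrt (revVote V) A := hj ▸ hSP j
  match m, P, V, A, hV, hR with
  | 0, P, V, A, hV, hR =>
    left; apply Equiv.ext; intro x; exact absurd x.2 (Nat.not_lt_zero _)
  | 1, P, V, A, hV, hR =>
    left; apply Equiv.ext; intro x; exact Subsingleton.elim _ _
  | (m+2), P, V, A, hV, hR => ?_
  set f : Fin (m+2) → Fin (m+2) := fun x => V (A.symm x) with hf
  have hfinj : Function.Injective f := fun a b h => by
    have := A.symm.injective (V.injective h); simpa using this
  have key : ∀ a b c : Fin (m+2), a < b → b < c → (f a < f b ↔ f b < f c) := by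
    intro a b c hab hbc
    have h1 := hV (A.symm a) (A.symm b) (A.symm c)
    have h2 := hR (A.symm a) (A.symm b) (A.symm c)
    simp only [Equiv.apply_symm_apply, not_and, revVote, Equiv.trans_apply,
      Fin.revPerm_apply, Fin.rev_lt_rev] at h1 h2
    have h1' := h1 hab hbc
    have h2' := h2 hab hbc
    have hbc' : b ≠ c := ne_of_lt hbc
    have hab' : a ≠ b := ne_of_lt hab
    constructor
    · intro h
      rcases lt_trichotomy (f b) (f c) with h' | h' | h'
      · exact h'
      · exact absurd (hfinj h') hbc'
      · exact absurd h' (h1' h)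
    · intro h
      rcases lt_trichotomy (f a) (f b) with h' | h' | h'
      · exact h'
      · exact absurd (hfinj h') hab'
      · exact absurd h (h2' h')
  have keyac : ∀ a b c : Fin (m+2), a < b → b < c → (f a < f b ↔ f a < f c) := by
    intro a b c hab hbc
    constructor
    · intro h; exact h.trans ((key a b c hab hbc).mp h)
    · intro h
      by_contra h'
      have hba : f b < f a := by
        rcases lt_trichotomy (f a) (f b) with h'' | h'' | h''
        · exact absurd h'' h'
        · exact absurd (hfinj h'') (ne_of_lt hab)
        · exact h''
      have : ¬ f b < f c := fun hb => h' ((key a b c hab hbc).mpr hb)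
      have hcb : f c < f b := by
        rcases lt_trichotomy (f b) (f c) with h'' | h'' | h''
        · exact absurd h'' this
        · exact absurd (hfinj h'') (ne_of_lt hbc)
        · exact h''
      exact absurd h (not_lt.mpr (le_of_lt (hcb.trans hba)))
  have bot : Fin (m+2) := 0
  have hbt : (0 : Fin (m+2)) < Fin.last (m+1) := by
    simp [Fin.lt_iff_val_lt_val, Fin.last]
  have pairwise : ∀ a b : Fin (m+2), a < b → (f a < f b ↔ f 0 < f (Fin.last (m+1))) := by
    intro a b hab
    have step1 : f a < f b ↔ f 0 < f b := by
      rcases eq_or_lt_of_le (Fin.zero_le a) with h0 | h0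
      · rw [← h0]
      · exact (key 0 a b h0 hab).symm.trans (keyac 0 a b h0 hab)
    have step2 : f 0 < f b ↔ f 0 < f (Fin.last (m+1)) := by
      rcases eq_or_lt_of_le (Fin.le_last b) with h0 | h0
      · rw [h0]
      · have h0b : (0 : Fin (m+2)) < b := lt_of_le_of_lt (Fin.zero_le a) hab
        exact keyac 0 b (Fin.last (m+1)) h0b h0
    exact step1.trans step2
  haveI : WellFoundedLT (Fin (m+2)) := inferInstance
  have hrange : Set.range f = Set.range (id : Fin (m+2) → Fin (m+2)) := by
    rw [Set.range_id]
    exact Set.range_eq_univ.mpr (A.symm.trans V).surjective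
  by_cases hs : f 0 < f (Fin.last (m+1))
  · left
    have hmono : StrictMono f := fun a b hab => (pairwise a b hab).mpr hs
    have hid : f = id := (hmono.range_inj strictMono_id).mp hrange
    apply Equiv.ext; intro x
    have := congrFun hid (A x)
    simp only [hf, Equiv.symm_apply_apply, id_eq] at this
    exact this.symm
  · right
    have hanti : ∀ a b : Fin (m+2), a < b → f b < f a := by
      intro a b hab
      rcases lt_trichotomy (f a) (f b) with h | h | h
      · exact absurd ((pairwise a b hab).mp h) hs
      · exact absurd (hfinj h) (ne_of_lt hab)
      · exact h
    have hmono : StrictMono (fun x => (f x).rev) := by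
      intro a b hab
      exact Fin.rev_lt_rev.mpr (hanti a b hab)
    have hrange2 : Set.range (fun x => (f x).rev) = Set.range (id : Fin (m+2) → Fin (m+2)) := by
      rw [Set.range_id]
      exact Set.range_eq_univ.mpr ((A.symm.trans V).trans Fin.revPerm).surjective
    have hid : (fun x => (f x).rev) = id := (hmono.range_inj strictMono_id).mp hrange2
    apply Equiv.ext; intro x
    have := congrFun hid (A x)
    simp only [hf, Equiv.symm_apply_apply, id_eq] at this
    have : V x = (A x).rev := by
      have h2 := congrArg Fin.rev this
      simpa using h2
    simp [revVote, this]
end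

section
/- Under the Impartial Anonymous Culture assumption with 3 candidates, the probability that a multiset of n votes is single-peaked equals 60n / ((n+2)(n+3)(n+4)). -/
open Finset

lemma sp_iff : ∀ V A : Equiv.Perm (Fin 3), SPwrt V A ↔ V (A⁻¹ 1) ≠ 2 := by
  have h : ∀ V A : Equiv.Perm (Fin 3),
      (∀ c₁ c₂ c₃ : Fin 3, ¬(A c₁ < A c₂ ∧ A c₂ < A c₃ ∧ V c₁ < V c₂ ∧ V c₃ < V c₂)) ↔
        V (A⁻¹ 1) ≠ 2 := by decide
  exact h

lemma exists_axis (M : Multiset (Equiv.Perm (Fin 3))) :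
    (∃ A, ∀ V ∈ M, SPwrt V A) ↔ ∃ c : Fin 3, ∀ V ∈ M, V c ≠ 2 := by
  constructor
  · rintro ⟨A, hA⟩
    exact ⟨A⁻¹ 1, fun V hV => (sp_iff V A).1 (hA V hV)⟩
  · rintro ⟨c, hc⟩
    refine ⟨Equiv.swap 1 c, fun V hV => (sp_iff V _).2 ?_⟩
    rw [Equiv.swap_inv, Equiv.swap_apply_left]
    exact hc V hV

lemma ncard_eq (n : ℕ) (Q : Multiset (Equiv.Perm (Fin 3)) → Prop) [DecidablePred Q] :
    {M : Multiset (Equiv.Perm (Fin 3)) | Multiset.card M = n ∧ Q M}.ncard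
      = (Finset.univ.filter (fun x : Sym (Equiv.Perm (Fin 3)) n => Q ↑x)).card := by
  have h : {M : Multiset (Equiv.Perm (Fin 3)) | Multiset.card M = n ∧ Q M}
      = ((↑) : Sym (Equiv.Perm (Fin 3)) n → Multiset (Equiv.Perm (Fin 3))) ''
        ↑(Finset.univ.filter (fun x : Sym (Equiv.Perm (Fin 3)) n => Q ↑x)) := by
    ext M
    constructor
    · rintro ⟨h1, h2⟩
      exact ⟨⟨M, h1⟩, Finset.mem_coe.2 (Finset.mem_filter.2 ⟨Finset.mem_univ _, h2⟩), rfl⟩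
    · rintro ⟨x, hx, rfl⟩
      simp only [Finset.coe_filter, Set.mem_setOf_eq] at hx
      exact ⟨x.2, hx.2⟩
  rw [h, Set.ncard_image_of_injective _ Sym.coe_injective, Set.ncard_coe_finset]

lemma card_finset_sym {α : Type*} [DecidableEq α] (s : Finset α) (n : ℕ) :
    (s.sym n).card = Nat.multichoose s.card n := by
  classical
  have himg : (Finset.univ.image (Sym.map (Subtype.val) : Sym {x // x ∈ s} n → Sym α n))
      = s.sym n := by
    ext y
    simp only [Finset.mem_image, Finset.mem_univ, true_and, Finset.mem_sym_iff]
    constructor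
    · rintro ⟨x, rfl⟩ a ha
      obtain ⟨b, _, rfl⟩ := Sym.mem_map.1 ha
      exact b.2
    · intro hy
      refine ⟨y.attach.map fun a => ⟨a.1, hy a.1 a.2⟩, ?_⟩
      rw [Sym.map_map]
      exact y.attach_map_coe
  rw [← himg, Finset.card_image_of_injective _ (Sym.map_injective Subtype.coe_injective n),
    Finset.card_univ, Sym.card_sym_eq_multichoose, Fintype.card_coe]

lemma filter_sym {α : Type*} [DecidableEq α] [Fintype α] (n : ℕ) (p : α → Prop)
    [DecidablePred p] :
    (Finset.univ.filter (fun x : Sym α n => ∀ V ∈ (x : Multiset α), p V))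
      = (Finset.univ.filter p).sym n := by
  ext x
  simp [Finset.mem_sym_iff, Sym.mem_coe]

/-- Under the Impartial Anonymous Culture assumption (elections are multisets of
`n` votes, all equally likely) with 3 candidates, the probability that an election
is single-peaked equals `60n / ((n+2)(n+3)(n+4))`. -/
theorem iac_three_candidates (n : ℕ) (hn : 1 ≤ n) :
    (({M : Multiset (Equiv.Perm (Fin 3)) |
        Multiset.card M = n ∧ ∃ A, ∀ V ∈ M, SPwrt V A}.ncard : ℝ) /
      ({M : Multiset (Equiv.Perm (Fin 3)) | Multiset.card M = n}.ncard : ℝ)) =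
      (60 * n : ℝ) / ((n + 2) * (n + 3) * (n + 4)) := by
  classical
  -- total count
  have htot : {M : Multiset (Equiv.Perm (Fin 3)) | Multiset.card M = n}.ncard
      = Nat.multichoose 6 n := by
    have h := ncard_eq n (fun _ => True)
    simp only [and_true] at h
    rw [h, Finset.filter_true_of_mem (fun _ _ => trivial), Finset.card_univ,
      Sym.card_sym_eq_multichoose]
    congr 1 <;> decide
  -- single-peaked count
  set B : Fin 3 → Finset (Equiv.Perm (Fin 3)) :=
    fun c => Finset.univ.filter (fun V => V c ≠ 2) with hB
  set A : Fin 3 → Finset (Sym (Equiv.Perm (Fin 3)) n) :=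
    fun c => (B c).sym n with hA
  have hAc : ∀ c, A c = Finset.univ.filter
      (fun x : Sym (Equiv.Perm (Fin 3)) n => ∀ V ∈ (x : Multiset (Equiv.Perm (Fin 3))), V c ≠ 2) := by
    intro c
    show (B c).sym n = _
    rw [hB]
    exact (filter_sym n fun V : Equiv.Perm (Fin 3) => V c ≠ 2).symm
  have hsp : {M : Multiset (Equiv.Perm (Fin 3)) |
      Multiset.card M = n ∧ ∃ A, ∀ V ∈ M, SPwrt V A}.ncard
      = (A 0 ∪ A 1 ∪ A 2).card := by
    have h1 : {M : Multiset (Equiv.Perm (Fin 3)) |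
        Multiset.card M = n ∧ ∃ A, ∀ V ∈ M, SPwrt V A}
        = {M : Multiset (Equiv.Perm (Fin 3)) |
        Multiset.card M = n ∧ ∃ c : Fin 3, ∀ V ∈ M, V c ≠ 2} := by
      ext M; simp only [Set.mem_setOf_eq, exists_axis]
    rw [h1, ncard_eq n (fun M => ∃ c : Fin 3, ∀ V ∈ M, V c ≠ 2)]
    congr 1
    ext x
    simp only [Finset.mem_filter, Finset.mem_univ, true_and, Finset.mem_union, hAc]
    constructor
    · rintro ⟨c, hc⟩
      fin_cases c
      · exact Or.inl (Or.inl hc)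
      · exact Or.inl (Or.inr hc)
      · exact Or.inr hc
    · rintro ((h | h) | h)
      exacts [⟨0, h⟩, ⟨1, h⟩, ⟨2, h⟩]
  -- cards of pieces
  have hcardB : ∀ c, (B c).card = 4 := by decide
  have hcardBB : ∀ c c', c ≠ c' → (B c ∩ B c').card = 2 := by decide
  have hB012 : (B 0 ∩ B 1 ∩ B 2 : Finset (Equiv.Perm (Fin 3))) = ∅ := by decide
  have hcardA : ∀ c, (A c).card = Nat.multichoose 4 n := by
    intro c; rw [hA, card_finset_sym, hcardB]
  have hcardAA : ∀ c c', c ≠ c' → (A c ∩ A c').card = Nat.multichoose 2 n := by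
    intro c c' h
    rw [hA, ← Finset.sym_inter, card_finset_sym, hcardBB c c' h]
  have hA012 : (A 0 ∩ A 1 ∩ A 2).card = 0 := by
    rw [hA, ← Finset.sym_inter, ← Finset.sym_inter, hB012, card_finset_sym,
      Finset.card_empty, Nat.multichoose_eq]
    exact Nat.choose_eq_zero_of_lt (by omega)
  -- inclusion–exclusion
  have hIE : (A 0 ∪ A 1 ∪ A 2).card + 3 * Nat.multichoose 2 n
      = 3 * Nat.multichoose 4 n := by
    have e1 := Finset.card_union_add_card_inter (A 0) (A 1)
    have e2 := Finset.card_union_add_card_inter (A 0 ∪ A 1) (A 2)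
    have e3 : (A 0 ∪ A 1) ∩ A 2 = (A 0 ∩ A 2) ∪ (A 1 ∩ A 2) :=
      Finset.union_inter_distrib_right _ _ _
    have e4 := Finset.card_union_add_card_inter (A 0 ∩ A 2) (A 1 ∩ A 2)
    have e5 : (A 0 ∩ A 2) ∩ (A 1 ∩ A 2) = A 0 ∩ A 1 ∩ A 2 := by
      ext x; simp only [Finset.mem_inter]; tauto
    rw [e3] at e2
    rw [e5, hA012] at e4
    rw [hcardA 0, hcardA 1, hcardA 2,
      hcardAA 0 1 (by decide), hcardAA 0 2 (by decide), hcardAA 1 2 (by decide)] at *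
    omega
  -- multichoose values as choose
  have m2 : Nat.multichoose 2 n = n + 1 := by
    rw [Nat.multichoose_eq]
    have : 2 + n - 1 = n + 1 := by omega
    rw [this, Nat.choose_succ_self_right]
  have m4 : Nat.multichoose 4 n = (n + 3).choose n := by
    rw [Nat.multichoose_eq]; congr 1; omega
  have m6 : Nat.multichoose 6 n = (n + 5).choose n := by
    rw [Nat.multichoose_eq]; congr 1; omega
  rw [htot, hsp, m6]
  have key : (A 0 ∪ A 1 ∪ A 2).card + 3 * (n + 1) = 3 * (n + 3).choose n := by
    rw [← m2, ← m4]; exact hIE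
  -- real arithmetic
  have c3 : ((n + 3).choose n : ℝ) = Nat.factorial (n + 3) / (Nat.factorial n * 6) := by
    rw [Nat.cast_choose ℝ (by omega : n ≤ n + 3)]
    norm_num [Nat.factorial]
  have c5 : ((n + 5).choose n : ℝ) = Nat.factorial (n + 5) / (Nat.factorial n * 120) := by
    rw [Nat.cast_choose ℝ (by omega : n ≤ n + 5)]
    have : n + 5 - n = 5 := by omega
    rw [this]
    norm_num [Nat.factorial]
  have f3 : (Nat.factorial (n + 3) : ℝ) = (n + 3) * ((n + 2) * ((n + 1) * (Nat.factorial n))) := by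
    rw [show n + 3 = (n + 2) + 1 from rfl, Nat.factorial_succ,
      show n + 2 = (n + 1) + 1 from rfl, Nat.factorial_succ, Nat.factorial_succ]
    push_cast; ring
  have f5 : (Nat.factorial (n + 5) : ℝ) = (n + 5) * ((n + 4) * ((n + 3) * ((n + 2) * ((n + 1) * (Nat.factorial n))))) := by
    rw [show n + 5 = (n + 4) + 1 from rfl, Nat.factorial_succ,
      show n + 4 = (n + 3) + 1 from rfl, Nat.factorial_succ,
      show n + 3 = (n + 2) + 1 from rfl, Nat.factorial_succ,
      show n + 2 = (n + 1) + 1 from rfl, Nat.factorial_succ, Nat.factorial_succ]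
    push_cast; ring
  have hnum : ((A 0 ∪ A 1 ∪ A 2).card : ℝ) = 3 * ((n + 3).choose n : ℝ) - 3 * (n + 1) := by
    have := congrArg (Nat.cast : ℕ → ℝ) key
    push_cast at this
    linarith
  rw [hnum, c3, c5, f3, f5]
  have hf : (Nat.factorial n : ℝ) ≠ 0 := by positivity
  have h1 : (n : ℝ) + 1 ≠ 0 := by positivity
  have h2 : (n : ℝ) + 2 ≠ 0 := by positivity
  have h3 : (n : ℝ) + 3 ≠ 0 := by positivity
  have h4 : (n : ℝ) + 4 ≠ 0 := by positivity
  have h5 : (n : ℝ) + 5 ≠ 0 := by positivity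
  field_simp
  ring
end
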